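/- Let n ≥ 1 and let k be an integer with 0 < k < n. For any x ∈ ℝⁿ, the function y ↦ -⟨x, y⟩ - H_b(y) attains a minimum on the set {y ∈ ℝⁿ : 0 < y_i < 1 for all i, ∑_i y_i = k}, and the minimizer is unique. -/

import Mathlib

open Real Finset Filter Topology

noncomputable def binEnt {n : ℕ} (y : Fin n → ℝ) : ℝ :=
  -∑ i, (y i * Real.log (y i) + (1 - y i) * Real.log (1 - y i))

noncomputable def lmlObj {n : ℕ} (x y : Fin n → ℝ) : ℝ :=
  -∑ i, x i * y i - binEnt y

noncomputable def gfun (t : ℝ) : ℝ := t * Real.log t + (1 - t) * Real.log (1 - t)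

lemma gfun_zero : gfun 0 = 0 := by simp [gfun]
lemma gfun_one : gfun 1 = 0 := by simp [gfun]
lemma gfun_symm (t : ℝ) : gfun (1 - t) = gfun t := by simp [gfun]; ring

lemma continuous_gfun : Continuous gfun := by
  have h : gfun = fun t => -Real.negMulLog t - Real.negMulLog (1 - t) := by
    funext t; simp [gfun, Real.negMulLog]; ring
  rw [h]; fun_prop

lemma hasDerivAt_gfun {a : ℝ} (h0 : a ≠ 0) (h1 : a ≠ 1) :
    HasDerivAt gfun (Real.log a - Real.log (1 - a)) a := by
  have h2 : (1 : ℝ) - a ≠ 0 := sub_ne_zero.2 (Ne.symm h1)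
  have hc : HasDerivAt (fun t : ℝ => 1 - t) (-1) a := by
    simpa using (hasDerivAt_id a).const_sub 1
  have hB := (Real.hasDerivAt_mul_log h2).comp a hc
  have hA := Real.hasDerivAt_mul_log h0
  have := hA.add hB
  have e : gfun = (fun x => x * Real.log x) + (fun x => x * Real.log x) ∘ HSub.hSub 1 := by
    funext t; simp [gfun]
  rw [e]; exact this.congr_deriv (by ring)

lemma q_interior {a : ℝ} (h0 : 0 < a) (h1 : a < 1) (d : ℝ) :
    Tendsto (fun t => (gfun (a + t * d) - gfun a) / t) (𝓝[>] (0:ℝ))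
      (𝓝 ((Real.log a - Real.log (1 - a)) * d)) := by
  have haff : HasDerivAt (fun t : ℝ => a + t * d) d 0 := by
    simpa using ((hasDerivAt_id (0:ℝ)).mul_const d).const_add a
  have hg : HasDerivAt gfun (Real.log a - Real.log (1 - a)) (a + 0 * d) := by
    simpa using hasDerivAt_gfun h0.ne' (ne_of_lt h1)
  have h := hg.comp 0 haff
  rw [hasDerivAt_iff_tendsto_slope] at h
  have h' := h.mono_left (nhdsWithin_mono _ (fun t ht => ne_of_gt ht))
  refine h'.congr (fun t => ?_)
  simp [slope_def_field]

lemma q_atBot {d : ℝ} (hd : 0 < d) :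
    Tendsto (fun t => gfun (t * d) / t) (𝓝[>] (0:ℝ)) atBot := by
  have hψ : HasDerivAt (fun t : ℝ => (1 - t * d) * Real.log (1 - t * d)) (-d) 0 := by
    have hc : HasDerivAt (fun t : ℝ => 1 - t * d) (-d) 0 := by
      simpa using ((hasDerivAt_id (0:ℝ)).mul_const d).const_sub 1
    have h1 : HasDerivAt (fun u : ℝ => u * Real.log u) (Real.log 1 + 1)
        ((fun t : ℝ => 1 - t * d) 0) := by
      have : ((fun t : ℝ => 1 - t * d) 0) = (1:ℝ) := by norm_num
      rw [this]
      exact Real.hasDerivAt_mul_log one_ne_zero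
    have := h1.comp 0 hc
    simpa [Function.comp_def] using this
  rw [hasDerivAt_iff_tendsto_slope] at hψ
  have hψ' : Tendsto (fun t => (1 - t * d) * Real.log (1 - t * d) / t) (𝓝[>] (0:ℝ)) (𝓝 (-d)) := by
    refine (hψ.mono_left (nhdsWithin_mono _ (fun t ht => ne_of_gt ht))).congr (fun t => ?_)
    simp [slope_def_field]
  have hlog : Tendsto (fun t : ℝ => Real.log (t * d)) (𝓝[>] (0:ℝ)) atBot := by
    apply Real.tendsto_log_nhdsGT_zero.comp
    have : Tendsto (fun t : ℝ => t * d) (𝓝 0) (𝓝 0) := by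
      exact (continuous_mul_const d).tendsto' 0 0 (by simp)
    refine tendsto_nhdsWithin_of_tendsto_nhds_of_eventually_within _
      (this.mono_left nhdsWithin_le_nhds) ?_
    filter_upwards [self_mem_nhdsWithin] with t ht
    exact mul_pos ht hd
  have hmain : Tendsto (fun t : ℝ => (1 - t * d) * Real.log (1 - t * d) / t + d * Real.log (t * d))
      (𝓝[>] (0:ℝ)) atBot := hψ'.add_atBot (hlog.const_mul_atBot hd)
  refine hmain.congr' ?_
  filter_upwards [self_mem_nhdsWithin] with t (ht : 0 < t)
  have : gfun (t * d) = t * d * Real.log (t * d) + (1 - t * d) * Real.log (1 - t * d) := rfl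
  rw [this]
  field_simp
  ring

lemma gfun_midpoint_le {a b : ℝ} (ha : a ∈ Set.Ioo (0:ℝ) 1) (hb : b ∈ Set.Ioo (0:ℝ) 1) :
    gfun ((a + b) / 2) ≤ (gfun a + gfun b) / 2 := by
  have h := Real.strictConvexOn_mul_log.convexOn.2 (Set.mem_Ici.2 ha.1.le) (Set.mem_Ici.2 hb.1.le)
    (by norm_num : (0:ℝ) ≤ 1/2) (by norm_num : (0:ℝ) ≤ 1/2) (by norm_num)
  have h2 := Real.strictConvexOn_mul_log.convexOn.2
    (Set.mem_Ici.2 (by linarith [ha.2] : (0:ℝ) ≤ 1 - a))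
    (Set.mem_Ici.2 (by linarith [hb.2] : (0:ℝ) ≤ 1 - b))
    (by norm_num : (0:ℝ) ≤ 1/2) (by norm_num : (0:ℝ) ≤ 1/2) (by norm_num)
  simp only [smul_eq_mul] at h h2
  have e1 : (1:ℝ)/2 * a + 1/2 * b = (a + b)/2 := by ring
  have e2 : (1:ℝ)/2 * (1-a) + 1/2 * (1-b) = 1 - (a + b)/2 := by ring
  rw [e1] at h; rw [e2] at h2
  simp only [gfun]; nlinarith [h, h2]

lemma gfun_midpoint_lt {a b : ℝ} (ha : a ∈ Set.Ioo (0:ℝ) 1) (hb : b ∈ Set.Ioo (0:ℝ) 1)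
    (hab : a ≠ b) : gfun ((a + b) / 2) < (gfun a + gfun b) / 2 := by
  have h := Real.strictConvexOn_mul_log.2 (Set.mem_Ici.2 ha.1.le) (Set.mem_Ici.2 hb.1.le) hab
    (by norm_num : (0:ℝ) < 1/2) (by norm_num : (0:ℝ) < 1/2) (by norm_num)
  have h2 := Real.strictConvexOn_mul_log.2
    (Set.mem_Ici.2 (by linarith [ha.2] : (0:ℝ) ≤ 1 - a))
    (Set.mem_Ici.2 (by linarith [hb.2] : (0:ℝ) ≤ 1 - b))
    (fun hc => hab (by have := hc; linarith))
    (by norm_num : (0:ℝ) < 1/2) (by norm_num : (0:ℝ) < 1/2) (by norm_num)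
  simp only [smul_eq_mul] at h h2
  have e1 : (1:ℝ)/2 * a + 1/2 * b = (a + b)/2 := by ring
  have e2 : (1:ℝ)/2 * (1-a) + 1/2 * (1-b) = 1 - (a + b)/2 := by ring
  rw [e1] at h; rw [e2] at h2
  simp only [gfun]; nlinarith [h, h2]

lemma lmlObj_eq {n : ℕ} (x y : Fin n → ℝ) :
    lmlObj x y = -∑ i, x i * y i + ∑ i, gfun (y i) := by
  simp [lmlObj, binEnt, gfun]

/-- for `0 < k < n`, the objective `y ↦ -⟨x,y⟩ - H_b(y)` attains a
minimum on `{y ∈ (0,1)ⁿ : ∑ y_i = k}`, and the minimizer is unique. -/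
theorem lml_min_exists_unique (n k : ℕ) (hn : 1 ≤ n) (hk : 0 < k) (hkn : k < n)
    (x : Fin n → ℝ) :
    ∃ y : Fin n → ℝ,
      ((∀ i, y i ∈ Set.Ioo (0 : ℝ) 1) ∧ ∑ i, y i = k) ∧
      (∀ z : Fin n → ℝ, ((∀ i, z i ∈ Set.Ioo (0 : ℝ) 1) ∧ ∑ i, z i = k) →
        lmlObj x y ≤ lmlObj x z) ∧
      (∀ z : Fin n → ℝ, ((∀ i, z i ∈ Set.Ioo (0 : ℝ) 1) ∧ ∑ i, z i = k) →
        (∀ w : Fin n → ℝ, ((∀ i, w i ∈ Set.Ioo (0 : ℝ) 1) ∧ ∑ i, w i = k) →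
          lmlObj x z ≤ lmlObj x w) → z = y) := by
  classical
  set F : (Fin n → ℝ) → ℝ := fun y => -∑ i, x i * y i + ∑ i, gfun (y i) with hF
  have hFcont : Continuous F := by
    apply Continuous.add
    · exact (continuous_finset_sum _ fun i _ => (continuous_const.mul (continuous_apply i))).neg
    · exact continuous_finset_sum _ fun i _ => continuous_gfun.comp (continuous_apply i)
  set K : Set (Fin n → ℝ) := {y | (∀ i, y i ∈ Set.Icc (0:ℝ) 1) ∧ ∑ i, y i = k} with hKdef
  have hnR : (0:ℝ) < n := by positivity
  have hkR : (0:ℝ) < k := by exact_mod_cast hk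
  have hknR : (k:ℝ) < n := by exact_mod_cast hkn
  -- the constant point
  set c : Fin n → ℝ := fun _ => (k:ℝ)/n with hc
  have hcIoo : ∀ i : Fin n, c i ∈ Set.Ioo (0:ℝ) 1 :=
    fun i => ⟨div_pos hkR hnR, (div_lt_one hnR).2 hknR⟩
  have hcsum : ∑ i, c i = (k:ℝ) := by
    simp [hc, Finset.sum_const, Finset.card_univ]
    field_simp
  have hcK : c ∈ K := ⟨fun i => ⟨(hcIoo i).1.le, (hcIoo i).2.le⟩, hcsum⟩
  -- K compact
  have hKcomp : IsCompact K := by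
    have h1 : K = (Set.univ.pi fun _ : Fin n => Set.Icc (0:ℝ) 1) ∩
        {y : Fin n → ℝ | ∑ i, y i = (k:ℝ)} := by
      ext y; simp [hKdef, Set.mem_pi, Pi.le_def, forall_and]
    rw [h1]
    exact (isCompact_univ_pi fun _ => isCompact_Icc).inter_right
      (isClosed_eq (continuous_finset_sum _ fun i _ => continuous_apply i) continuous_const)
  obtain ⟨y₀, hy₀K, hy₀min⟩ := hKcomp.exists_isMinOn ⟨c, hcK⟩ hFcont.continuousOn
  -- y₀ is in the open cube
  have hy₀Ioo : ∀ i, y₀ i ∈ Set.Ioo (0:ℝ) 1 := by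
    by_contra hbad
    push_neg at hbad
    obtain ⟨i₀, hi₀⟩ := hbad
    have hi₀' : y₀ i₀ = 0 ∨ y₀ i₀ = 1 := by
      rcases (hy₀K.1 i₀) with ⟨h1, h2⟩
      rcases eq_or_lt_of_le h1 with h | h
      · exact Or.inl h.symm
      rcases eq_or_lt_of_le h2 with h' | h'
      · exact Or.inr h'
      exact absurd ⟨h, h'⟩ hi₀
    set d : Fin n → ℝ := fun i => c i - y₀ i with hd
    set q : Fin n → ℝ → ℝ := fun i t => (gfun (y₀ i + t * d i) - gfun (y₀ i)) / t with hq
    -- the bad coordinate quotient tends to -∞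
    have hbadcase : ∀ i : Fin n, y₀ i = 0 ∨ y₀ i = 1 →
        Tendsto (q i) (𝓝[>] (0:ℝ)) atBot := by
      intro i hi
      rcases hi with hi | hi
      · have hdi : 0 < d i := by
          simp only [hd, hi, sub_zero]; exact (hcIoo i).1
        have : q i = fun t => gfun (t * d i) / t := by
          funext t; simp [hq, hi, gfun_zero]
        rw [this]; exact q_atBot hdi
      · have hdi : 0 < -d i := by
          simp only [hd, hi]; linarith [(hcIoo i).2]
        have : q i = fun t => gfun (t * (-d i)) / t := by
          funext t
          simp only [hq, hi, gfun_one, sub_zero]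
          congr 1
          rw [show (1:ℝ) + t * d i = 1 - t * -d i by ring, gfun_symm]
        rw [this]; exact q_atBot hdi
    have hbadi₀ := hbadcase i₀ hi₀'
    -- every coordinate quotient is eventually bounded above
    have hbound : ∀ i : Fin n, ∃ M : ℝ, ∀ᶠ t in 𝓝[>] (0:ℝ), q i t ≤ M := by
      intro i
      rcases Classical.em (y₀ i = 0 ∨ y₀ i = 1) with hi | hi
      · exact ⟨0, (hbadcase i hi).eventually (eventually_le_atBot 0)⟩
      · push_neg at hi
        have h0 : 0 < y₀ i := lt_of_le_of_ne (hy₀K.1 i).1 (Ne.symm hi.1)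
        have h1 : y₀ i < 1 := lt_of_le_of_ne (hy₀K.1 i).2 hi.2
        set L := (Real.log (y₀ i) - Real.log (1 - y₀ i)) * d i with hL
        refine ⟨L + 1, ?_⟩
        have := q_interior h0 h1 (d i)
        exact (this.eventually_lt_const (lt_add_one L)).mono fun t ht => ht.le
    choose M hM using hbound
    set A : ℝ := -∑ i, x i * d i + ∑ i ∈ Finset.univ.erase i₀, M i with hA
    -- eventually the objective strictly decreases along the path
    have hev : ∀ᶠ t in 𝓝[>] (0:ℝ),
        (∀ i, q i t ≤ M i) ∧ A + q i₀ t < 0 ∧ t < 1 := by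
      have h1 : ∀ᶠ t in 𝓝[>] (0:ℝ), ∀ i, q i t ≤ M i := by
        rw [Filter.eventually_all]; exact hM
      have h2 : ∀ᶠ t in 𝓝[>] (0:ℝ), A + q i₀ t < 0 := by
        have := hbadi₀.eventually (eventually_lt_atBot (-A))
        filter_upwards [this] with t ht; linarith
      have h3 : ∀ᶠ t in 𝓝[>] (0:ℝ), t < 1 := by
        apply eventually_nhdsWithin_of_eventually_nhds
        exact Iio_mem_nhds one_pos
      filter_upwards [h1, h2, h3] with t ht1 ht2 ht3
      exact ⟨ht1, ht2, ht3⟩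
    obtain ⟨t, ht, htpos⟩ := (hev.and self_mem_nhdsWithin).exists
    obtain ⟨hqM, hneg, ht1⟩ := ht
    have htpos' : (0:ℝ) < t := htpos
    set p : Fin n → ℝ := fun i => y₀ i + t * d i with hp
    have hpK : p ∈ K := by
      constructor
      · intro i
        have h01 := hy₀K.1 i
        have hci := hcIoo i
        constructor
        · have : p i = (1 - t) * y₀ i + t * c i := by simp [hp, hd]; ring
          rw [this]
          have : 0 ≤ (1-t) * y₀ i := mul_nonneg (by linarith) h01.1
          nlinarith [hci.1, htpos']
        · have : p i = (1 - t) * y₀ i + t * c i := by simp [hp, hd]; ring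
          rw [this]
          nlinarith [h01.2, hci.2, htpos']
      · have : ∑ i, p i = ∑ i, y₀ i + t * (∑ i, c i - ∑ i, y₀ i) := by
          simp [hp, hd, Finset.sum_add_distrib, Finset.mul_sum, mul_sub]
        rw [this, hy₀K.2, hcsum]; ring
    -- F decreases: contradiction
    have hFp : F p = F y₀ + t * (-∑ i, x i * d i + ∑ i, q i t) := by
      simp only [hF, hq]
      have hsum : ∑ i, x i * p i = ∑ i, x i * y₀ i + t * ∑ i, x i * d i := by
        simp [hp, Finset.sum_add_distrib, Finset.mul_sum, mul_add]
        apply Finset.sum_congr rfl; intro i _; ring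
      have hgsum : ∀ i, gfun (p i) = gfun (y₀ i) + t * ((gfun (y₀ i + t * d i) - gfun (y₀ i)) / t) := by
        intro i; field_simp [hp]; simp only [hp]; ring
      rw [hsum, Finset.sum_congr rfl (fun i _ => hgsum i)]
      rw [Finset.sum_add_distrib, ← Finset.mul_sum]
      ring
    have hle : ∑ i, q i t ≤ q i₀ t + ∑ i ∈ Finset.univ.erase i₀, M i := by
      rw [← Finset.add_sum_erase _ _ (Finset.mem_univ i₀)]
      exact add_le_add le_rfl (Finset.sum_le_sum fun i _ => hqM i)
    have hlt : F p < F y₀ := by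
      rw [hFp]
      have : -∑ i, x i * d i + ∑ i, q i t < 0 := by
        have : -∑ i, x i * d i + (q i₀ t + ∑ i ∈ Finset.univ.erase i₀, M i) < 0 := by
          simp only [hA] at hneg; linarith
        linarith
      nlinarith
    exact absurd (hy₀min hpK) (not_le.2 hlt)
  -- now conclude
  have hSsubK : ∀ z : Fin n → ℝ, ((∀ i, z i ∈ Set.Ioo (0 : ℝ) 1) ∧ ∑ i, z i = k) → z ∈ K :=
    fun z hz => ⟨fun i => ⟨(hz.1 i).1.le, (hz.1 i).2.le⟩, hz.2⟩
  have hmin : ∀ z : Fin n → ℝ, ((∀ i, z i ∈ Set.Ioo (0 : ℝ) 1) ∧ ∑ i, z i = k) →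
      lmlObj x y₀ ≤ lmlObj x z := by
    intro z hz
    rw [lmlObj_eq, lmlObj_eq]
    exact hy₀min (hSsubK z hz)
  refine ⟨y₀, ⟨hy₀Ioo, hy₀K.2⟩, hmin, ?_⟩
  intro z hz hzmin
  by_contra hne
  obtain ⟨j, hj⟩ := Function.ne_iff.1 hne
  set m : Fin n → ℝ := fun i => (z i + y₀ i) / 2 with hm
  have hmS : (∀ i, m i ∈ Set.Ioo (0 : ℝ) 1) ∧ ∑ i, m i = k := by
    constructor
    · intro i
      have h1 := hz.1 i; have h2 := hy₀Ioo i
      constructor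
      · have a1 := h1.1; have b1 := h2.1; simp only [hm]; linarith
      · simp only [hm]; rcases h1 with ⟨_, a2⟩; rcases h2 with ⟨_, b2⟩; linarith
    · simp only [hm]
      rw [← Finset.sum_div, Finset.sum_add_distrib, hz.2, hy₀K.2]; ring
  have hvals : lmlObj x z = lmlObj x y₀ := le_antisymm (hzmin y₀ ⟨hy₀Ioo, hy₀K.2⟩) (hmin z hz)
  have hstrict : lmlObj x m < (lmlObj x z + lmlObj x y₀) / 2 := by
    rw [lmlObj_eq, lmlObj_eq, lmlObj_eq]
    have hlin : -∑ i, x i * m i = (-∑ i, x i * z i + -∑ i, x i * y₀ i) / 2 := by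
      have hcoord : ∀ i ∈ Finset.univ, x i * m i = (x i * z i + x i * y₀ i) / 2 :=
        fun i _ => by simp only [hm]; ring
      rw [Finset.sum_congr rfl hcoord, ← Finset.sum_div, Finset.sum_add_distrib]
      ring
    have hent : ∑ i, gfun (m i) < (∑ i, gfun (z i) + ∑ i, gfun (y₀ i)) / 2 := by
      rw [← Finset.sum_add_distrib, Finset.sum_div]
      apply Finset.sum_lt_sum
      · intro i _
        exact (by exact gfun_midpoint_le (hz.1 i) (hy₀Ioo i) : gfun (m i) ≤ (gfun (z i) + gfun (y₀ i))/2)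
      · exact ⟨j, Finset.mem_univ j, gfun_midpoint_lt (hz.1 j) (hy₀Ioo j) hj⟩
    rw [hlin]
    linarith
  have := hzmin m hmS
  rw [hvals] at hstrict
  linarith
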